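/- Let t_n denote the number of independent dominating sets of the chain triangular cactus T_n. For every n ≥ 1, the number of independent dominating sets of T_{n+1} that do not contain the end cut vertex x_{n+1} equals t_n. -/

import Mathlib

/-- `S` is an independent dominating set of `G`: pairwise non-adjacent, and every
vertex outside `S` has a neighbour in `S`. -/
def IsIndepDomSet {V : Type*} (G : SimpleGraph V) (S : Finset V) : Prop :=
  (∀ v ∈ S, ∀ w ∈ S, ¬ G.Adj v w) ∧ ∀ v, v ∉ S → ∃ w ∈ S, G.Adj v w

/-- The chain triangular cactus `T n`: vertices `Sum.inl i` are `x i`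
(`0 ≤ i ≤ n`) and `Sum.inr k` is `y (k+1)` (`0 ≤ k ≤ n-1`); the `i`-th triangle
(`1 ≤ i ≤ n`) has vertices `x (i-1)`, `x i`, `y i`. -/
def triChain (n : ℕ) : SimpleGraph (Fin (n + 1) ⊕ Fin n) :=
  SimpleGraph.fromRel fun p q =>
    match p, q with
    | Sum.inl i, Sum.inl j => (i : ℕ) + 1 = (j : ℕ)
    | Sum.inl i, Sum.inr k => (i : ℕ) = (k : ℕ) ∨ (i : ℕ) = (k : ℕ) + 1
    | _, _ => False

/-- The number of independent dominating sets of the chain triangular cactus `T n`. -/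
noncomputable def numIDSTri (n : ℕ) : ℕ :=
  Nat.card {S : Finset (Fin (n + 1) ⊕ Fin n) // IsIndepDomSet (triChain n) S}

namespace TriChainAux

open Sum

lemma adj_ll {n : ℕ} {i j : Fin (n+1)} :
    (triChain n).Adj (inl i) (inl j) ↔ ((i:ℕ)+1 = j ∨ (j:ℕ)+1 = i) := by
  simp only [triChain, SimpleGraph.fromRel_adj]
  constructor
  · rintro ⟨-, h⟩; exact h
  · intro h
    refine ⟨fun he => ?_, h⟩
    injection he with he
    subst he
    omega

lemma adj_lr {n : ℕ} {i : Fin (n+1)} {k : Fin n} :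
    (triChain n).Adj (inl i) (inr k) ↔ ((i:ℕ) = k ∨ (i:ℕ) = k + 1) := by
  simp only [triChain, SimpleGraph.fromRel_adj]
  constructor
  · rintro ⟨-, h | h⟩
    · exact h
    · exact h.elim
  · intro h
    exact ⟨by simp, Or.inl h⟩

lemma adj_rl {n : ℕ} {i : Fin (n+1)} {k : Fin n} :
    (triChain n).Adj (inr k) (inl i) ↔ ((i:ℕ) = k ∨ (i:ℕ) = k + 1) := by
  rw [SimpleGraph.adj_comm]; exact adj_lr

lemma adj_rr {n : ℕ} {k l : Fin n} : ¬ (triChain n).Adj (inr k) (inr l) := by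
  simp [triChain, SimpleGraph.fromRel_adj]

/-- The natural embedding of the vertices of `T n` into those of `T (n+1)`. -/
def emb (n : ℕ) : (Fin (n+1) ⊕ Fin n) ↪ (Fin (n+2) ⊕ Fin (n+1)) :=
  ⟨Sum.map Fin.castSucc Fin.castSucc, by
    intro a b h
    cases a <;> cases b <;> simp_all [Fin.castSucc_inj]⟩

lemma emb_inl {n : ℕ} (i : Fin (n+1)) : emb n (inl i) = inl i.castSucc := rfl
lemma emb_inr {n : ℕ} (k : Fin n) : emb n (inr k) = inr k.castSucc := rfl

lemma adj_emb {n : ℕ} {v w : Fin (n+1) ⊕ Fin n} :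
    (triChain (n+1)).Adj (emb n v) (emb n w) ↔ (triChain n).Adj v w := by
  cases v <;> cases w <;>
    simp [emb_inl, emb_inr, adj_ll, adj_lr, adj_rl, adj_rr]

lemma emb_ne_xlast {n : ℕ} (v : Fin (n+1) ⊕ Fin n) :
    emb n v ≠ inl (Fin.last (n+1)) := by
  cases v with
  | inl i =>
    simp only [emb_inl, ne_eq, inl.injEq]
    intro h
    have : ((i.castSucc : Fin (n+2)) : ℕ) = n + 1 := by rw [h]; simp
    simp at this
    omega
  | inr k => simp [emb_inr]

lemma emb_ne_ytop {n : ℕ} (v : Fin (n+1) ⊕ Fin n) :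
    emb n v ≠ inr (Fin.last n) := by
  cases v with
  | inl i => simp [emb_inl]
  | inr k =>
    simp only [emb_inr, ne_eq, inr.injEq]
    intro h
    have : ((k.castSucc : Fin (n+1)) : ℕ) = n := by rw [h]; simp
    simp at this
    omega

lemma exists_emb {n : ℕ} (p : Fin (n+2) ⊕ Fin (n+1))
    (h1 : p ≠ inl (Fin.last (n+1))) (h2 : p ≠ inr (Fin.last n)) :
    ∃ v, emb n v = p := by
  cases p with
  | inl i =>
    have hi : (i : ℕ) < n + 1 := by
      have h : (i : ℕ) ≠ n + 1 := by
        intro h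
        exact h1 (congrArg inl (Fin.ext (by simpa using h)))
      have := i.isLt
      omega
    exact ⟨inl ⟨i, hi⟩, congrArg inl (Fin.ext (by simp))⟩
  | inr k =>
    have hk : (k : ℕ) < n := by
      have h : (k : ℕ) ≠ n := by
        intro h
        exact h2 (congrArg inr (Fin.ext (by simpa using h)))
      have := k.isLt
      omega
    exact ⟨inr ⟨k, hk⟩, congrArg inr (Fin.ext (by simp))⟩

variable {n : ℕ}

/-- Forward map: restrict to the small vertex set. -/
noncomputable def toSmall (S : Finset (Fin (n+2) ⊕ Fin (n+1))) : Finset (Fin (n+1) ⊕ Fin n) :=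
  S.preimage (emb n) ((emb n).injective.injOn)

lemma mem_toSmall {S : Finset (Fin (n+2) ⊕ Fin (n+1))} {v : Fin (n+1) ⊕ Fin n} :
    v ∈ toSmall S ↔ emb n v ∈ S := Finset.mem_preimage

/-- Backward map. -/
def toBig (S' : Finset (Fin (n+1) ⊕ Fin n)) : Finset (Fin (n+2) ⊕ Fin (n+1)) :=
  if inl (Fin.last n) ∈ S' then S'.map (emb n)
  else insert (inr (Fin.last n)) (S'.map (emb n))

lemma fwd (hn : 1 ≤ n) {S : Finset (Fin (n+2) ⊕ Fin (n+1))}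
    (hS : IsIndepDomSet (triChain (n+1)) S) (hx : inl (Fin.last (n+1)) ∉ S) :
    IsIndepDomSet (triChain n) (toSmall S) := by
  constructor
  · intro v hv w hw hadj
    exact hS.1 _ (mem_toSmall.mp hv) _ (mem_toSmall.mp hw) (adj_emb.mpr hadj)
  · intro v hv
    have hv' : emb n v ∉ S := fun h => hv (mem_toSmall.mpr h)
    obtain ⟨w, hwS, hadj⟩ := hS.2 _ hv'
    by_cases hwx : w = inl (Fin.last (n+1))
    · exact absurd (hwx ▸ hwS) hx
    by_cases hwy : w = inr (Fin.last n)
    · -- hard case: then v = x_n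
      subst hwy
      cases v with
      | inr k => exact absurd hadj (by rw [emb_inr]; exact adj_rr)
      | inl i =>
        rw [emb_inl] at hadj
        have hi : (i : ℕ) = n := by
          rcases adj_lr.mp hadj with h | h <;> simp at h <;> omega
        have hyb : (⟨n - 1, by omega⟩ : Fin n) = (⟨n-1, by omega⟩ : Fin n) := rfl
        by_cases h1 : emb n (inr (⟨n - 1, by omega⟩ : Fin n)) ∈ S
        · refine ⟨inr ⟨n - 1, by omega⟩, mem_toSmall.mpr h1, ?_⟩
          rw [adj_lr]
          right; simp; omega
        · obtain ⟨u, huS, hu⟩ := hS.2 _ h1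
          rw [emb_inr] at hu
          cases u with
          | inr l => exact absurd hu adj_rr
          | inl j =>
            have hj : (j : ℕ) = n - 1 ∨ (j : ℕ) = n := by
              rcases adj_rl.mp hu with h | h <;> simp at h <;> omega
            rcases hj with hj | hj
            · refine ⟨inl ⟨n - 1, by omega⟩, mem_toSmall.mpr ?_, ?_⟩
              · have : emb n (inl (⟨n - 1, by omega⟩ : Fin (n+1))) = inl j := by
                  rw [emb_inl]
                  exact congrArg inl (Fin.ext (by simp; omega))
                rwa [this]
              · rw [adj_ll]; right; simp; omega
            · exfalso
              have : (inl j : Fin (n+2) ⊕ Fin (n+1)) = emb n (inl i) := by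
                rw [emb_inl]
                exact congrArg inl (Fin.ext (by simp; omega))
              exact hv' (this ▸ huS)
    · obtain ⟨w', hw'⟩ := exists_emb w hwx hwy
      subst hw'
      exact ⟨w', mem_toSmall.mpr hwS, adj_emb.mp hadj⟩

lemma xlast_not_mem_toBig {S' : Finset (Fin (n+1) ⊕ Fin n)} :
    inl (Fin.last (n+1)) ∉ toBig S' := by
  unfold toBig
  split <;> simp only [Finset.mem_insert, Finset.mem_map] <;>
    push_neg <;>
    first
    | exact fun v _ => emb_ne_xlast v
    | exact ⟨by simp, fun v _ => emb_ne_xlast v⟩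

lemma bwd {S' : Finset (Fin (n+1) ⊕ Fin n)}
    (hS' : IsIndepDomSet (triChain n) S') :
    IsIndepDomSet (triChain (n+1)) (toBig S') := by
  unfold toBig
  split_ifs with hc
  · constructor
    · intro a ha b hb hadj
      obtain ⟨a', ha', rfl⟩ := Finset.mem_map.mp ha
      obtain ⟨b', hb', rfl⟩ := Finset.mem_map.mp hb
      exact hS'.1 _ ha' _ hb' (adj_emb.mp hadj)
    · intro p hp
      by_cases h1 : p = inl (Fin.last (n+1))
      · subst h1
        refine ⟨emb n (inl (Fin.last n)), Finset.mem_map_of_mem _ hc, ?_⟩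
        rw [emb_inl, adj_ll]
        right; simp
      by_cases h2 : p = inr (Fin.last n)
      · subst h2
        refine ⟨emb n (inl (Fin.last n)), Finset.mem_map_of_mem _ hc, ?_⟩
        rw [emb_inl, adj_rl]
        left; simp
      · obtain ⟨v, rfl⟩ := exists_emb p h1 h2
        have hv : v ∉ S' := fun h => hp (Finset.mem_map_of_mem _ h)
        obtain ⟨w', hw', hadj⟩ := hS'.2 v hv
        exact ⟨emb n w', Finset.mem_map_of_mem _ hw', adj_emb.mpr hadj⟩
  · have key : ∀ w' ∈ S', ¬ (triChain (n+1)).Adj (inr (Fin.last n)) (emb n w') := by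
      intro w' hw' hadj
      cases w' with
      | inr k => rw [emb_inr] at hadj; exact adj_rr hadj
      | inl j =>
        rw [emb_inl] at hadj
        have : (j : ℕ) = n := by
          rcases adj_rl.mp hadj with h | h <;> simp at h <;> omega
        have : j = Fin.last n := Fin.ext (by simpa using this)
        exact hc (this ▸ hw')
    constructor
    · intro a ha b hb hadj
      rcases Finset.mem_insert.mp ha with rfl | ha
      · rcases Finset.mem_insert.mp hb with rfl | hb
        · exact (triChain (n+1)).irrefl hadj
        · obtain ⟨b', hb', rfl⟩ := Finset.mem_map.mp hb
          exact key _ hb' hadj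
      · obtain ⟨a', ha', rfl⟩ := Finset.mem_map.mp ha
        rcases Finset.mem_insert.mp hb with rfl | hb
        · exact key _ ha' hadj.symm
        · obtain ⟨b', hb', rfl⟩ := Finset.mem_map.mp hb
          exact hS'.1 _ ha' _ hb' (adj_emb.mp hadj)
    · intro p hp
      by_cases h1 : p = inl (Fin.last (n+1))
      · subst h1
        refine ⟨inr (Fin.last n), Finset.mem_insert_self _ _, ?_⟩
        rw [adj_lr]; right; simp
      by_cases h2 : p = inr (Fin.last n)
      · exact absurd (h2 ▸ Finset.mem_insert_self _ _) hp
      · obtain ⟨v, rfl⟩ := exists_emb p h1 h2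
        have hv : v ∉ S' := fun h =>
          hp (Finset.mem_insert_of_mem (Finset.mem_map_of_mem _ h))
        obtain ⟨w', hw', hadj⟩ := hS'.2 v hv
        exact ⟨emb n w', Finset.mem_insert_of_mem (Finset.mem_map_of_mem _ hw'),
          adj_emb.mpr hadj⟩

lemma toSmall_toBig {S' : Finset (Fin (n+1) ⊕ Fin n)} :
    toSmall (toBig S') = S' := by
  ext v
  rw [mem_toSmall]
  unfold toBig
  split_ifs with hc
  · exact Finset.mem_map' _
  · rw [Finset.mem_insert]
    constructor
    · rintro (h | h)
      · exact absurd h (emb_ne_ytop v)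
      · exact (Finset.mem_map' _).mp h
    · exact fun h => Or.inr ((Finset.mem_map' _).mpr h)

lemma toBig_toSmall {S : Finset (Fin (n+2) ⊕ Fin (n+1))}
    (hS : IsIndepDomSet (triChain (n+1)) S) (hx : inl (Fin.last (n+1)) ∉ S) :
    toBig (toSmall S) = S := by
  have hmap : ∀ p, p ∈ (toSmall S).map (emb n) ↔ p ∈ S ∧ p ≠ inl (Fin.last (n+1)) ∧
      p ≠ inr (Fin.last n) := by
    intro p
    rw [Finset.mem_map]
    constructor
    · rintro ⟨v, hv, rfl⟩
      exact ⟨mem_toSmall.mp hv, emb_ne_xlast v, emb_ne_ytop v⟩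
    · rintro ⟨hp, h1, h2⟩
      obtain ⟨v, rfl⟩ := exists_emb p h1 h2
      exact ⟨v, mem_toSmall.mpr hp, rfl⟩
  unfold toBig
  split_ifs with hc
  · -- x_n ∈ S, then y_{n+1} ∉ S
    have hxn : emb n (inl (Fin.last n)) ∈ S := mem_toSmall.mp hc
    have hy : inr (Fin.last n) ∉ S := by
      intro hy
      refine hS.1 _ hxn _ hy ?_
      rw [emb_inl, adj_lr]
      left; simp
    ext p
    rw [hmap]
    constructor
    · exact fun h => h.1
    · intro hp
      refine ⟨hp, fun h => hx (h ▸ hp), fun h => hy (h ▸ hp)⟩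
  · -- x_n ∉ S, then y_{n+1} ∈ S (needed to dominate x_{n+1})
    have hxn : emb n (inl (Fin.last n)) ∉ S := fun h => hc (mem_toSmall.mpr h)
    have hy : inr (Fin.last n) ∈ S := by
      obtain ⟨w, hwS, hadj⟩ := hS.2 _ hx
      cases w with
      | inl j =>
        exfalso
        have hj : (j : ℕ) = n := by
          rcases adj_ll.mp hadj with h | h <;> simp at h
          · omega
          · omega
        have : (inl j : Fin (n+2) ⊕ Fin (n+1)) = emb n (inl (Fin.last n)) := by
          rw [emb_inl]
          exact congrArg inl (Fin.ext (by simp; omega))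
        exact hxn (this ▸ hwS)
      | inr k =>
        have hk : (k : ℕ) = n := by
          rcases adj_lr.mp hadj with h | h <;> simp at h <;> omega
        have : k = Fin.last n := Fin.ext (by simpa using hk)
        exact this ▸ hwS
    ext p
    rw [Finset.mem_insert, hmap]
    constructor
    · rintro (rfl | h)
      · exact hy
      · exact h.1
    · intro hp
      by_cases h2 : p = inr (Fin.last n)
      · exact Or.inl h2
      · exact Or.inr ⟨hp, fun h => hx (h ▸ hp), h2⟩

end TriChainAux

open Sum TriChainAux in
/-- For every `n ≥ 1`, the number of independent dominating sets of `T (n+1)` that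
do not contain the end cut vertex `x (n+1)` equals `t n`. -/
theorem numIDSTri_not_containing_end (n : ℕ) (hn : 1 ≤ n) :
    Nat.card {S : Finset (Fin (n + 2) ⊕ Fin (n + 1)) //
        IsIndepDomSet (triChain (n + 1)) S ∧ Sum.inl (Fin.last (n + 1)) ∉ S} =
      numIDSTri n := by
  rw [numIDSTri]
  exact Nat.card_congr
    { toFun := fun S => ⟨toSmall S.1, fwd hn S.2.1 S.2.2⟩
      invFun := fun S' => ⟨toBig S'.1, bwd S'.2, xlast_not_mem_toBig⟩
      left_inv := fun S => Subtype.ext (toBig_toSmall S.2.1 S.2.2)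
      right_inv := fun S' => Subtype.ext toSmall_toBig }
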